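/- For x ≥ 2, the sum of log p / p over primes p ≤ x equals log x + O(1); i.e., there is an absolute constant C such that |∑_{p ≤ x, p prime} (log p)/p − log x| ≤ C for all x ≥ 2. -/

import Mathlib

open Finset Real Nat


lemma stirl_low : ∀ n : ℕ, 1 ≤ n → (n:ℝ) * Real.log n - n + 1 ≤ Real.log (n !) := by
  intro n hn
  induction n with
  | zero => omega
  | succ k ih =>
    rcases Nat.eq_or_lt_of_le hn with h | h
    · simp [← h]
    · have hk : 1 ≤ k := by omega
      have ihk := ih hk
      have hk0 : (0:ℝ) < k := by exact_mod_cast hk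
      have hlog : Real.log ((k+1:ℝ)/k) ≤ (k+1:ℝ)/k - 1 :=
        Real.log_le_sub_one_of_pos (by positivity)
      have hdiv : (k+1:ℝ)/k - 1 = 1/k := by field_simp; ring
      have h2 : (k:ℝ) * (Real.log (k+1) - Real.log k) ≤ 1 := by
        rw [Real.log_div (by positivity) (by positivity), hdiv] at hlog
        calc (k:ℝ) * (Real.log (↑k+1) - Real.log k) ≤ k * (1/k) := by nlinarith
          _ = 1 := by field_simp
      have hfact : Real.log ((k+1)!) = Real.log (k !) + Real.log (k+1) := by
        rw [Nat.factorial_succ]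
        push_cast
        rw [Real.log_mul (by positivity) (by positivity)]
        ring
      have : ((k:ℝ)+1) * Real.log (↑k+1) - ((k:ℝ)+1) + 1 ≤ Real.log (k !) + Real.log (↑k+1) := by
        nlinarith
      rw [hfact]; push_cast; linarith

lemma stirl_up : ∀ n : ℕ, Real.log (n !) ≤ (n:ℝ) * Real.log n := by
  intro n
  induction n with
  | zero => simp
  | succ k ih =>
    have hfact : Real.log ((k+1)!) = Real.log (k !) + Real.log (k+1) := by
      rw [Nat.factorial_succ]; push_cast
      rw [Real.log_mul (by positivity) (by positivity)]; ring
    have hmono : Real.log (k:ℝ) ≤ Real.log (↑k+1) := by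
      rcases Nat.eq_zero_or_pos k with h | h
      · simp [h]
      · exact Real.log_le_log (by exact_mod_cast h) (by linarith)
    have hlog0 : 0 ≤ Real.log ((k:ℝ)+1) := Real.log_nonneg (by linarith [Nat.cast_nonneg (α := ℝ) k])
    rw [hfact]; push_cast; nlinarith



lemma log_le_two_sqrt {m : ℕ} (hm : 1 ≤ m) : Real.log m ≤ 2 * Real.sqrt m := by
  have h0 : (0:ℝ) < m := by exact_mod_cast hm
  have hs : (0:ℝ) < Real.sqrt m := Real.sqrt_pos.2 h0
  have : Real.log (Real.sqrt m) ≤ Real.sqrt m - 1 := Real.log_le_sub_one_of_pos hs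
  have hls : Real.log m = 2 * Real.log (Real.sqrt m) := by
    rw [Real.log_sqrt h0.le]; ring
  linarith

lemma tele_sum (n : ℕ) : ∑ m ∈ Finset.Icc 2 n, 1 / ((m:ℝ) * Real.sqrt m) ≤ 2 := by
  have key : ∀ m : ℕ, 2 ≤ m →
      1 / ((m:ℝ) * Real.sqrt m) ≤ 2 * (1 / Real.sqrt ((m:ℝ)-1) - 1 / Real.sqrt m) := by
    intro m hm
    set a := Real.sqrt ((m:ℝ)-1) with ha
    set b := Real.sqrt (m:ℝ) with hb
    have h1 : (1:ℝ) ≤ (m:ℝ) - 1 := by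
      have : (2:ℝ) ≤ m := by exact_mod_cast hm
      linarith
    have h0 : (0:ℝ) < (m:ℝ) - 1 := by linarith
    have hm0 : (0:ℝ) < m := by linarith
    have hbp : (0:ℝ) < b := Real.sqrt_pos.2 hm0
    have hap : (0:ℝ) < a := Real.sqrt_pos.2 h0
    have sq1 : a ^ 2 = (m:ℝ)-1 := Real.sq_sqrt h0.le
    have sq2 : b ^ 2 = (m:ℝ) := Real.sq_sqrt hm0.le
    have hle : a ≤ b := Real.sqrt_le_sqrt (by linarith)
    have hba : (b - a) * (a + b) = 1 := by nlinarith
    have hsub : 1/a - 1/b = 1/(a+b) / (a*b) := by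
      rw [div_sub_div _ _ hap.ne' hbp.ne', div_div]
      rw [div_eq_div_iff (by positivity) (by positivity)]
      linear_combination (a*b) * hba
    have h2 : 2 * (1/(a+b)/(a*b)) = 2/((a+b)*(a*b)) := by
      rw [div_div]; ring
    rw [hsub, show (m:ℝ) = b^2 from sq2.symm, h2,
        div_le_div_iff₀ (by positivity) (by positivity)]
    nlinarith
  calc ∑ m ∈ Finset.Icc 2 n, 1 / ((m:ℝ) * Real.sqrt m)
      ≤ ∑ m ∈ Finset.Icc 2 n, 2 * (1 / Real.sqrt ((m:ℝ)-1) - 1 / Real.sqrt m) := by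
        apply Finset.sum_le_sum
        intro m hm
        exact key m (Finset.mem_Icc.1 hm).1
    _ = 2 * ∑ m ∈ Finset.Icc 2 n, (1 / Real.sqrt ((m:ℝ)-1) - 1 / Real.sqrt m) := by
        rw [Finset.mul_sum]
    _ ≤ 2 := by
        have h1 : ∑ m ∈ Finset.Icc 2 n, (1 / Real.sqrt ((m:ℝ)-1) - 1 / Real.sqrt m) ≤ 1 := by
          rcases Nat.lt_or_ge n 2 with h | h
          · rw [Finset.Icc_eq_empty (by omega)]; simp
          · rw [show Finset.Icc 2 n = Finset.Ico 2 (n+1) by rw [Finset.Ico_add_one_right_eq_Icc],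
              Finset.sum_Ico_eq_sum_range]
            have heq : ∀ j : ℕ, (1 / Real.sqrt (((2+j:ℕ):ℝ)-1) - 1 / Real.sqrt ((2+j:ℕ):ℝ))
                = (fun i : ℕ => 1 / Real.sqrt ((i:ℝ)+1)) j - (fun i : ℕ => 1 / Real.sqrt ((i:ℝ)+1)) (j+1) := by
              intro j
              push_cast
              norm_num
              ring_nf
            rw [Finset.sum_congr rfl fun j _ => heq j]
            rw [Finset.sum_range_sub' (fun i : ℕ => 1 / Real.sqrt ((i:ℝ)+1)) (n+1-2)]
            have h0 : 0 ≤ 1 / Real.sqrt ((((n+1-2):ℕ):ℝ)+1) := by positivity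
            show 1 / Real.sqrt (((0:ℕ):ℝ)+1) - 1 / Real.sqrt ((((n+1-2):ℕ):ℝ)+1) ≤ 1
            norm_num
        linarith



lemma logsq_sum (n : ℕ) : ∑ m ∈ Finset.Icc 2 n, Real.log m / ((m:ℝ))^2 ≤ 4 := by
  calc ∑ m ∈ Finset.Icc 2 n, Real.log m / ((m:ℝ))^2
      ≤ ∑ m ∈ Finset.Icc 2 n, 2 * (1 / ((m:ℝ) * Real.sqrt m)) := by
        apply Finset.sum_le_sum
        intro m hm
        have h2 : 2 ≤ m := (Finset.mem_Icc.1 hm).1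
        have hm0 : (0:ℝ) < m := by
          have : (2:ℝ) ≤ m := by exact_mod_cast h2
          linarith
        have hsq : Real.sqrt m * Real.sqrt m = (m:ℝ) := Real.mul_self_sqrt hm0.le
        have hsp : (0:ℝ) < Real.sqrt m := Real.sqrt_pos.2 hm0
        have hlog := log_le_two_sqrt (show 1 ≤ m by omega)
        rw [div_le_iff₀ (by positivity)]
        have key : 2 * (1 / ((m:ℝ) * Real.sqrt m)) * (m:ℝ)^2 = 2 * Real.sqrt m := by
          field_simp
          nlinarith
        rw [key]
        exact hlog
    _ = 2 * ∑ m ∈ Finset.Icc 2 n, 1 / ((m:ℝ) * Real.sqrt m) := by rw [Finset.mul_sum]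
    _ ≤ 2 * 2 := by linarith [tele_sum n]
    _ = 4 := by norm_num

lemma theta_le (n : ℕ) : ∑ p ∈ (Finset.range (n+1)).filter Nat.Prime, Real.log p ≤ (n:ℝ) * Real.log 4 := by
  have h1 : ∑ p ∈ (Finset.range (n+1)).filter Nat.Prime, Real.log p
      = Real.log (primorial n) := by
    rw [primorial]
    push_cast
    rw [Real.log_prod]
    intro p hp
    have := (Finset.mem_filter.1 hp).2
    exact_mod_cast this.pos.ne'
  rw [h1]
  calc Real.log (primorial n) ≤ Real.log ((4:ℕ)^n) := by
        apply Real.log_le_log (by exact_mod_cast primorial_pos n)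
        exact_mod_cast primorial_le_4_pow n
    _ = (n:ℝ) * Real.log 4 := by push_cast; rw [Real.log_pow]



lemma legendre_eq {n p : ℕ} (hp : p.Prime) (hn : n ≠ 0) :
    (n !).factorization p = ∑ i ∈ Finset.Ico 1 (Nat.log p n + 1), n / p ^ i := by
  set b := Nat.log p n + 1 with hb
  have hbn : Nat.log p n < b := by omega
  have hfne : n ! ≠ 0 := Nat.factorial_ne_zero n
  have h1 : p ^ ((n !).factorization p) ∣ n ! := Nat.ordProj_dvd _ _
  have h2 : ¬ p ^ ((n !).factorization p + 1) ∣ n ! :=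
    Nat.pow_succ_factorization_not_dvd hfne hp
  have hle := (hp.pow_dvd_factorial_iff hbn).1 h1
  have hlt : ¬ ((n !).factorization p + 1 ≤ ∑ i ∈ Finset.Ico 1 b, n / p ^ i) := by
    intro hcon
    exact h2 ((hp.pow_dvd_factorial_iff hbn).2 hcon)
  omega

lemma e_low {n p : ℕ} (hp : p.Prime) (hpn : p ≤ n) :
    (n:ℝ)/p - 1 ≤ ((n !).factorization p : ℝ) := by
  have hn0 : n ≠ 0 := by have := hp.pos; omega
  have hlog1 : 1 ≤ Nat.log p n := Nat.log_pos hp.one_lt hpn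
  have hmem : 1 ∈ Finset.Ico 1 (Nat.log p n + 1) := Finset.mem_Ico.2 ⟨le_rfl, by omega⟩
  have h1 : n / p ≤ (n !).factorization p := by
    rw [legendre_eq hp hn0]
    calc n / p = n / p ^ 1 := by rw [pow_one]
      _ ≤ _ := Finset.single_le_sum (f := fun i => n / p ^ i) (fun i _ => Nat.zero_le _) hmem
  have hp0 : (0:ℝ) < p := by exact_mod_cast hp.pos
  have hmod : (n:ℝ) < p * ((n/p : ℕ) : ℝ) + p := by
    have h := Nat.div_add_mod n p
    have hm : n % p < p := Nat.mod_lt _ hp.pos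
    have : (n:ℝ) = p * ((n/p : ℕ):ℝ) + ((n % p : ℕ):ℝ) := by exact_mod_cast h.symm
    rw [this]
    have : ((n % p : ℕ):ℝ) < p := by exact_mod_cast hm
    linarith
  have h2 : ((n/p : ℕ) : ℝ) ≤ ((n !).factorization p : ℝ) := by exact_mod_cast h1
  have h3 : (n:ℝ)/p < ((n/p : ℕ):ℝ) + 1 := by
    rw [div_lt_iff₀ hp0]; nlinarith
  linarith

lemma geom_tail {p : ℕ} (hp : 2 ≤ p) (b : ℕ) :
    ∑ i ∈ Finset.Ico 2 b, (1/(p:ℝ))^i ≤ 2/(p:ℝ)^2 := by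
  have hp0 : (0:ℝ) < p := by exact_mod_cast Nat.lt_of_lt_of_le Nat.zero_lt_two hp
  set r : ℝ := 1/(p:ℝ) with hr
  have hr0 : 0 ≤ r := by positivity
  have hrh : r ≤ 1/2 := by
    rw [hr, div_le_div_iff₀ hp0 (by norm_num)]
    have : (2:ℝ) ≤ p := by exact_mod_cast hp
    linarith
  have hr1 : r < 1 := by linarith
  have hgeo : ∀ m : ℕ, ∑ j ∈ Finset.range m, r^j ≤ 2 := by
    intro m
    rw [geom_sum_eq (by linarith) m]
    rw [div_le_iff_of_neg (by linarith)]
    have : 0 ≤ r ^ m := by positivity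
    nlinarith
  calc ∑ i ∈ Finset.Ico 2 b, r^i
      = ∑ j ∈ Finset.range (b-2), r^(2+j) := Finset.sum_Ico_eq_sum_range _ 2 b
    _ = r^2 * ∑ j ∈ Finset.range (b-2), r^j := by
        rw [Finset.mul_sum]
        exact Finset.sum_congr rfl fun j _ => by rw [pow_add]
    _ ≤ r^2 * 2 := by nlinarith [hgeo (b-2), sq_nonneg r]
    _ = 2/(p:ℝ)^2 := by
        rw [hr, div_pow, one_pow]
        ring

lemma e_up {n p : ℕ} (hp : p.Prime) (hn : n ≠ 0) :
    ((n !).factorization p : ℝ) ≤ (n:ℝ)/p + (n:ℝ) * (2/(p:ℝ)^2) := by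
  have hp0 : (0:ℝ) < p := by exact_mod_cast hp.pos
  set b := Nat.log p n + 1 with hb
  rw [legendre_eq hp hn]
  have hcast : ((∑ i ∈ Finset.Ico 1 b, n / p ^ i : ℕ) : ℝ)
      ≤ ∑ i ∈ Finset.Ico 1 b, (n:ℝ) * (1/(p:ℝ))^i := by
    push_cast
    apply Finset.sum_le_sum
    intro i _
    have h1 : ((n / p ^ i : ℕ) : ℝ) ≤ (n:ℝ) / (p:ℝ)^i := by
      rw [← Nat.cast_pow]
      exact Nat.cast_div_le
    calc ((n / p ^ i : ℕ) : ℝ) ≤ (n:ℝ) / (p:ℝ)^i := h1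
      _ = (n:ℝ) * (1/(p:ℝ))^i := by rw [div_pow, one_pow]; ring
  refine hcast.trans ?_
  rcases Nat.lt_or_ge b 2 with hb2 | hb2
  · have : Finset.Ico 1 b ⊆ Finset.Ico 1 2 := Finset.Ico_subset_Ico le_rfl (by omega)
    calc ∑ i ∈ Finset.Ico 1 b, (n:ℝ) * (1/(p:ℝ))^i
        ≤ ∑ i ∈ Finset.Ico 1 2, (n:ℝ) * (1/(p:ℝ))^i := by
          apply Finset.sum_le_sum_of_subset_of_nonneg this
          intro i _ _; positivity
      _ = (n:ℝ) * (1/(p:ℝ))^1 := by norm_num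
      _ ≤ (n:ℝ)/p + (n:ℝ) * (2/(p:ℝ)^2) := by
          rw [pow_one]
          have : (n:ℝ) * (1/(p:ℝ)) = (n:ℝ)/p := by ring
          rw [this]
          have : 0 ≤ (n:ℝ) * (2/(p:ℝ)^2) := by positivity
          linarith
  · rw [Finset.sum_eq_sum_Ico_succ_bot (by omega : 1 < b)]
    have h2 : ∑ i ∈ Finset.Ico 2 b, (n:ℝ) * (1/(p:ℝ))^i
        = (n:ℝ) * ∑ i ∈ Finset.Ico 2 b, (1/(p:ℝ))^i := by rw [Finset.mul_sum]
    rw [h2]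
    have h3 := geom_tail hp.two_le b
    have hn0 : (0:ℝ) ≤ n := Nat.cast_nonneg n
    have h4 : (n:ℝ) * (1/(p:ℝ))^1 = (n:ℝ)/p := by rw [pow_one]; ring
    rw [h4]
    nlinarith



lemma log_factorial_eq (n : ℕ) :
    Real.log (n !) = ∑ p ∈ (Finset.range (n+1)).filter Nat.Prime,
      ((n !).factorization p : ℝ) * Real.log p := by
  have hfne : n ! ≠ 0 := Nat.factorial_ne_zero n
  have hsub : (n !).factorization.support ⊆ (Finset.range (n+1)).filter Nat.Prime := by
    intro p hp
    have hps : p ∈ (n !).primeFactors := by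
      rwa [Nat.support_factorization] at hp
    have hpp : p.Prime := Nat.prime_of_mem_primeFactors hps
    have hdvd : p ∣ n ! := Nat.dvd_of_mem_primeFactors hps
    have hpn : p ≤ n := (Nat.Prime.dvd_factorial hpp).1 hdvd
    exact Finset.mem_filter.2 ⟨Finset.mem_range.2 (by omega), hpp⟩
  have hprod : n ! = ∏ p ∈ (Finset.range (n+1)).filter Nat.Prime, p ^ (n !).factorization p := by
    conv_lhs => rw [← Nat.factorization_prod_pow_eq_self hfne]
    rw [Finsupp.prod]
    refine Finset.prod_subset (f := fun p => p ^ (n !).factorization p) hsub (fun p _ hp => ?_)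
    simp only [Finsupp.notMem_support_iff.1 hp, pow_zero]
  conv_lhs => rw [hprod]
  push_cast
  rw [Real.log_prod]
  · exact Finset.sum_congr rfl fun p hp => by
      rw [Real.log_pow]
  · intro p hp
    have hpp := (Finset.mem_filter.1 hp).2
    have : (0:ℝ) < p := by exact_mod_cast hpp.pos
    positivity



lemma mertens_nat {n : ℕ} (hn : 2 ≤ n) :
    |(∑ p ∈ (Finset.range (n+1)).filter Nat.Prime, Real.log p / p) - Real.log n| ≤ 9 := by
  set s := (Finset.range (n+1)).filter Nat.Prime with hs
  set S := ∑ p ∈ s, Real.log p / p with hS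
  have hn0 : (0:ℝ) < n := by exact_mod_cast Nat.lt_of_lt_of_le Nat.zero_lt_two hn
  have hmem : ∀ p ∈ s, p.Prime ∧ p ≤ n := by
    intro p hp
    have := Finset.mem_filter.1 hp
    exact ⟨this.2, by have := Finset.mem_range.1 this.1; omega⟩
  have hlogp_nonneg : ∀ p ∈ s, 0 ≤ Real.log p := fun p _ => Real.log_natCast_nonneg p
  -- lower bound on log n!
  have hlow : (n:ℝ) * S - (n:ℝ) * Real.log 4 ≤ Real.log (n !) := by
    rw [log_factorial_eq n]
    have h1 : ∑ p ∈ s, ((n:ℝ)/p - 1) * Real.log p ≤ ∑ p ∈ s, ((n !).factorization p : ℝ) * Real.log p := by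
      apply Finset.sum_le_sum
      intro p hp
      exact mul_le_mul_of_nonneg_right (e_low (hmem p hp).1 (hmem p hp).2) (hlogp_nonneg p hp)
    have h2 : ∑ p ∈ s, ((n:ℝ)/p - 1) * Real.log p
        = (n:ℝ) * S - ∑ p ∈ s, Real.log p := by
      rw [hS, Finset.mul_sum, ← Finset.sum_sub_distrib]
      apply Finset.sum_congr rfl
      intro p hp
      field_simp
    have h3 := theta_le n
    rw [← hs] at h3
    linarith
  -- upper bound on log n!
  have hup : Real.log (n !) ≤ (n:ℝ) * S + 8 * n := by
    rw [log_factorial_eq n]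
    have h1 : ∑ p ∈ s, ((n !).factorization p : ℝ) * Real.log p
        ≤ ∑ p ∈ s, ((n:ℝ)/p + (n:ℝ) * (2/(p:ℝ)^2)) * Real.log p := by
      apply Finset.sum_le_sum
      intro p hp
      exact mul_le_mul_of_nonneg_right (e_up (hmem p hp).1 (by omega)) (hlogp_nonneg p hp)
    have h2 : ∑ p ∈ s, ((n:ℝ)/p + (n:ℝ) * (2/(p:ℝ)^2)) * Real.log p
        = (n:ℝ) * S + 2 * n * ∑ p ∈ s, Real.log p / (p:ℝ)^2 := by
      rw [hS, Finset.mul_sum, Finset.mul_sum, ← Finset.sum_add_distrib]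
      apply Finset.sum_congr rfl
      intro p hp
      have hp0 : (0:ℝ) < p := by exact_mod_cast (hmem p hp).1.pos
      field_simp
    have h3 : ∑ p ∈ s, Real.log p / (p:ℝ)^2 ≤ 4 := by
      calc ∑ p ∈ s, Real.log p / (p:ℝ)^2
          ≤ ∑ m ∈ Finset.Icc 2 n, Real.log m / ((m:ℝ))^2 := by
            apply Finset.sum_le_sum_of_subset_of_nonneg
            · intro p hp
              exact Finset.mem_Icc.2 ⟨(hmem p hp).1.two_le, (hmem p hp).2⟩
            · intro m hm _
              have h2m : 2 ≤ m := (Finset.mem_Icc.1 hm).1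
              have : (0:ℝ) < m := by exact_mod_cast Nat.lt_of_lt_of_le Nat.zero_lt_two h2m
              have := Real.log_natCast_nonneg m
              positivity
        _ ≤ 4 := logsq_sum n
    have hnn : (0:ℝ) ≤ 2 * n := by positivity
    nlinarith
  have hsl := stirl_low n (by omega)
  have hsu := stirl_up n
  have hlog4 : Real.log 4 ≤ 2 := by
    have h2 : Real.log 2 ≤ 1 := by
      have := Real.log_le_sub_one_of_pos (show (0:ℝ) < 2 by norm_num)
      linarith
    have : Real.log 4 = 2 * Real.log 2 := by
      rw [show (4:ℝ) = 2^2 by norm_num, Real.log_pow]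
      norm_num
    linarith
  rw [abs_le]
  constructor
  · -- S - log n ≥ -9 : from n log n - n ≤ n S + 8n
    have h : (n:ℝ) * Real.log n - n ≤ (n:ℝ) * S + 8 * n := by linarith
    have h2 : (n:ℝ) * (Real.log n - 9) ≤ (n:ℝ) * S := by nlinarith
    have h3 : Real.log n - 9 ≤ S := le_of_mul_le_mul_left (by linarith) hn0
    linarith
  · -- S ≤ log n + 9 : from n S - n log 4 ≤ n log n
    have h : (n:ℝ) * S ≤ (n:ℝ) * (Real.log n + 9) := by nlinarith
    have h3 : S ≤ Real.log n + 9 := le_of_mul_le_mul_left h hn0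
    linarith



theorem mertens_first :
    ∃ C : ℝ, ∀ x : ℝ, 2 ≤ x →
      |(∑ p ∈ (Finset.range (⌊x⌋₊ + 1)).filter Nat.Prime, Real.log p / p) - Real.log x| ≤ C := by
  refine ⟨9 + Real.log 2, fun x hx => ?_⟩
  set n := ⌊x⌋₊ with hn
  have hx0 : (0:ℝ) < x := by linarith
  have h2n : 2 ≤ n := Nat.le_floor (by exact_mod_cast hx)
  have hnx : (n:ℝ) ≤ x := Nat.floor_le hx0.le
  have hxn1 : x < (n:ℝ) + 1 := Nat.lt_floor_add_one x
  have hn0 : (0:ℝ) < n := by exact_mod_cast Nat.lt_of_lt_of_le Nat.zero_lt_two h2n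
  have hx2n : x ≤ 2 * n := by
    have : (n:ℝ) + 1 ≤ 2 * n := by linarith
    linarith
  have hlog1 : Real.log n ≤ Real.log x := Real.log_le_log hn0 hnx
  have hlog2 : Real.log x ≤ Real.log 2 + Real.log n := by
    calc Real.log x ≤ Real.log (2 * n) := Real.log_le_log hx0 hx2n
      _ = Real.log 2 + Real.log n := Real.log_mul (by norm_num) hn0.ne'
  have hm := mertens_nat h2n
  rw [abs_le] at hm ⊢
  have hl2 : 0 ≤ Real.log 2 := Real.log_nonneg (by norm_num)
  constructor <;> [linarith [hm.1]; linarith [hm.2]]
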